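/- Let K be a field, R a K-algebra with an action of a group G by K-algebra automorphisms, and suppose the K-points A(K) of Spec R, with the Zariski topology, form a G-Noetherian topological space. Then for every G-stable ideal I of R there exist finitely many elements f_1, ..., f_l ∈ I such that a point y ∈ A(K) lies in the zero set of I if and only if f_i(g·y) = 0 for all i = 1,...,l and all g ∈ G. -/

import Mathlib

/-- A topological space with an action `act : G → X → X` is `G`-Noetherian if every
descending chain of closed `G`-stable subsets stabilises. -/
def IsTopGNoetherian {G X : Type*} [TopologicalSpace X] (act : G → X → X) : Prop :=
  ∀ C : ℕ → Set X,
    (∀ n, IsClosed (C n)) →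
    (∀ n, C (n + 1) ⊆ C n) →
    (∀ n g x, x ∈ C n → act g x ∈ C n) →
    ∃ m, ∀ n, m ≤ n → C n = C m

/-- The Zariski topology on the set `A(K) = Hom_{K-alg}(R, K)` of `K`-rational
points of `Spec R`: closed sets are common zero sets of subsets of `R`. -/
def zariskiTopology (K R : Type*) [CommRing K] [CommRing R] [Algebra K R] :
    TopologicalSpace (R →ₐ[K] K) :=
  TopologicalSpace.generateFrom {U | ∃ f : R, U = {y : R →ₐ[K] K | y f ≠ 0}}

/-- if `A(K)` with the Zariski topology is `G`-Noetherian, then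
every `G`-stable ideal `I` of `R` admits finitely many elements `f₁, …, f_l ∈ I`
such that `y` lies in the zero set of `I` iff `fᵢ(g • y) = 0` for all `i` and
all `g ∈ G`. -/
theorem finitely_many_equations_of_topGNoetherian
    {G : Type*} [Group G] (K R : Type*) [Field K] [CommRing R] [Algebra K R]
    (ρ : G →* (R ≃ₐ[K] R))
    (hA : @IsTopGNoetherian G (R →ₐ[K] K) (zariskiTopology K R)
      (fun (g : G) (y : R →ₐ[K] K) => y.comp (ρ g⁻¹).toAlgHom))
    (I : Ideal R) (hI : ∀ (g : G), ∀ x ∈ I, ρ g x ∈ I) :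
    ∃ (l : ℕ) (f : Fin l → R), (∀ i, f i ∈ I) ∧
      ∀ y : R →ₐ[K] K,
        ((∀ x ∈ I, y x = 0) ↔ ∀ (i : Fin l) (g : G), (y.comp (ρ g⁻¹).toAlgHom) (f i) = 0) := by
  classical
  letI : TopologicalSpace (R →ₐ[K] K) := zariskiTopology K R
  -- zero set of a subset `S` together with all its `G`-translates
  set Z : Set R → Set (R →ₐ[K] K) :=
    fun S => {y | ∀ x ∈ S, ∀ g : G, y (ρ g x) = 0} with hZ
  -- basic opens
  have hopen : ∀ h : R, IsOpen {y : R →ₐ[K] K | y h ≠ 0} :=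
    fun h => TopologicalSpace.GenerateOpen.basic _ ⟨h, rfl⟩
  have hclosed0 : ∀ h : R, IsClosed {y : R →ₐ[K] K | y h = 0} := by
    intro h
    rw [← isOpen_compl_iff]
    convert hopen h using 1
    ext y; simp
  have hZclosed : ∀ S : Set R, IsClosed (Z S) := by
    intro S
    have : Z S = ⋂ x ∈ S, ⋂ g : G, {y : R →ₐ[K] K | y (ρ g x) = 0} := by
      ext y; simp [hZ]
    rw [this]
    exact isClosed_biInter fun x _ => isClosed_iInter fun g => hclosed0 _
  have hZstable : ∀ (S : Set R) (g : G) (y : R →ₐ[K] K),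
      y ∈ Z S → y.comp (ρ g⁻¹).toAlgHom ∈ Z S := by
    intro S g y hy x hx g'
    have : (y.comp (ρ g⁻¹).toAlgHom) (ρ g' x) = y (ρ (g⁻¹ * g') x) := by
      simp [map_mul]
    rw [this]
    exact hy x hx _
  have hZmono : ∀ S T : Set R, S ⊆ T → Z T ⊆ Z S :=
    fun S T hST y hy x hx g => hy x (hST hx) g
  -- key claim: a finite subset suffices
  have key : ∃ F : Finset R, (↑F : Set R) ⊆ (I : Set R) ∧ Z ↑F = Z (I : Set R) := by
    by_contra hcon
    push_neg at hcon
    have step : ∀ F : Finset R, (↑F : Set R) ⊆ (I : Set R) →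
        ∃ x, x ∈ I ∧ ∃ y, y ∈ Z ↑F ∧ y x ≠ 0 := by
      intro F hF
      have hne := hcon F hF
      have hsub : Z (I : Set R) ⊆ Z ↑F := hZmono _ _ hF
      have : ¬ (Z ↑F ⊆ Z (I : Set R)) := fun h => hne (le_antisymm h hsub)
      obtain ⟨y, hyF, hyI⟩ := Set.not_subset.mp this
      simp only [hZ, Set.mem_setOf_eq, not_forall] at hyI
      obtain ⟨x, hxI, g, hxg⟩ := hyI
      exact ⟨ρ g x, hI g x hxI, y, hyF, hxg⟩
    choose! x hxI y hyZ hyne using step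
    -- build the strictly descending chain
    let F : ℕ → Finset R := fun n => Nat.rec (motive := fun _ => Finset R) ∅ (fun _ Fn => Fn ∪ {x Fn}) n
    have hFsub : ∀ n, (↑(F n) : Set R) ⊆ (I : Set R) := by
      intro n
      induction n with
      | zero => simp [F]
      | succ n ih =>
          intro a ha
          simp only [F, Finset.coe_union, Finset.coe_singleton, Set.mem_union,
            Set.mem_singleton_iff] at ha
          rcases ha with ha | ha
          · exact ih ha
          · subst ha; exact hxI _ (by exact ih)
    have hFmono : ∀ n, F n ⊆ F (n + 1) := fun n => Finset.subset_union_left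
    set C : ℕ → Set (R →ₐ[K] K) := fun n => Z ↑(F n) with hC
    obtain ⟨m, hm⟩ := hA C (fun n => hZclosed _)
      (fun n => hZmono _ _ (Finset.coe_subset.mpr (hFmono n)))
      (fun n g yy hyy => hZstable _ g yy hyy)
    have h1 : y (F m) (hFsub m) ∈ C (m + 1) := by
      have := hm (m + 1) (Nat.le_succ m)
      rw [this]
      exact hyZ _ (hFsub m)
    have h2 : (y (F m) (hFsub m)) (x (F m)) = 0 := by
      have hx' : x (F m) ∈ (↑(F (m + 1)) : Set R) := by
        simp [F]
      have := h1 (x (F m)) hx' 1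
      simpa using this
    exact hyne _ (hFsub m) h2
  obtain ⟨F, hFI, hFZ⟩ := key
  refine ⟨F.toList.length, fun i => F.toList.get i, ?_, ?_⟩
  · intro i
    exact hFI (by simpa using (Finset.mem_toList.mp (F.toList.get_mem _)))
  · intro yy
    constructor
    · intro hy i g
      have hmem : F.toList.get i ∈ I :=
        hFI (by simpa using (Finset.mem_toList.mp (F.toList.get_mem _)))
      exact hy _ (hI g⁻¹ _ hmem)
    · intro h xx hxx
      have hyZF : yy ∈ Z ↑F := by
        intro a ha g
        obtain ⟨i, hi⟩ := List.mem_iff_get.mp (Finset.mem_toList.mpr ha)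
        have := h i g⁻¹
        rw [← hi]
        simpa using this
      have hyZI : yy ∈ Z (I : Set R) := hFZ ▸ hyZF
      have := hyZI xx hxx 1
      simpa using this
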